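/- Let A and B be n×n positive definite Hermitian matrices. Then trace(A⁻¹B) ≤ (trace(B⁻¹A))^{n−1} · (det B / det A). (Applied with A = g, B = g̃ this gives (n + Δφ) ≤ (n − Δ̃φ)^{n−1} e^F for solutions of the complex Monge–Ampère equation.) -/

import Mathlib

open Finset in
lemma aux_esymm {ι : Type*} [DecidableEq ι] (s : Finset ι) (x : ι → ℝ)
    (hx : ∀ i ∈ s, 0 < x i) :
    ∑ i ∈ s, ∏ j ∈ s.erase i, x j ≤ (∑ i ∈ s, x i) ^ (s.card - 1) := by
  induction s using Finset.induction_on with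
  | empty => simp
  | @insert a t ha ih =>
    have hxa : 0 < x a := hx a (mem_insert_self a t)
    have hxt : ∀ i ∈ t, 0 < x i := fun i hi => hx i (mem_insert_of_mem hi)
    rw [sum_insert ha, sum_insert ha, erase_insert ha]
    have hrw : ∀ i ∈ t, ∏ j ∈ (insert a t).erase i, x j = x a * ∏ j ∈ t.erase i, x j := by
      intro i hi
      have hia : i ≠ a := ne_of_mem_of_not_mem hi ha
      rw [erase_insert_of_ne hia.symm, prod_insert (fun h => ha (mem_of_mem_erase h))]
    rw [sum_congr rfl hrw, ← mul_sum]
    rcases t.eq_empty_or_nonempty with rfl | hne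
    · simp
    · set T := ∑ i ∈ t, x i with hT
      have hTpos : 0 < T := sum_pos hxt hne
      obtain ⟨k, hk⟩ : ∃ k, t.card = k + 1 :=
        ⟨t.card - 1, (Nat.succ_pred_eq_of_pos (card_pos.mpr hne)).symm⟩
      have hcard : (insert a t).card - 1 = k + 1 := by
        rw [card_insert_of_notMem ha, hk]; omega
      rw [hcard]
      have h1 : ∏ j ∈ t, x j ≤ T ^ (k + 1) := by
        rw [← hk]
        calc ∏ j ∈ t, x j ≤ ∏ j ∈ t, T :=
              prod_le_prod (fun i hi => (hxt i hi).le)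
                (fun i hi => single_le_sum (fun j hj => (hxt j hj).le) hi)
          _ = T ^ t.card := by rw [prod_const]
      have h2 : ∑ i ∈ t, ∏ j ∈ t.erase i, x j ≤ T ^ k := by
        have := ih hxt
        rwa [hk, Nat.add_sub_cancel] at this
      calc (∏ j ∈ t, x j) + x a * ∑ i ∈ t, ∏ j ∈ t.erase i, x j
          ≤ T ^ (k + 1) + x a * T ^ k :=
            add_le_add h1 (mul_le_mul_of_nonneg_left h2 hxa.le)
        _ = (T + x a) * T ^ k := by ring
        _ ≤ (x a + T) * (x a + T) ^ k :=
            mul_le_mul (by linarith) (pow_le_pow_left₀ hTpos.le (by linarith) k)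
              (by positivity) (by positivity)
        _ = (x a + T) ^ (k + 1) := by ring

lemma aux_key {n : ℕ} (μ : Fin n → ℝ) (hμ : ∀ i, 0 < μ i) :
    ∑ i, μ i ≤ (∑ i, (μ i)⁻¹) ^ (n - 1) * ∏ i, μ i := by
  have h1 : ∀ i : Fin n, μ i = (∏ j ∈ Finset.univ.erase i, (μ j)⁻¹) * ∏ j, μ j := by
    intro i
    have h0 : (∏ j ∈ Finset.univ.erase i, μ j) ≠ 0 :=
      ne_of_gt (Finset.prod_pos fun j _ => hμ j)
    rw [Finset.prod_inv_distrib, inv_mul_eq_div, eq_div_iff h0,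
      Finset.mul_prod_erase Finset.univ μ (Finset.mem_univ i)]
  calc ∑ i, μ i = (∑ i, ∏ j ∈ Finset.univ.erase i, (μ j)⁻¹) * ∏ j, μ j := by
        rw [Finset.sum_mul]; exact Finset.sum_congr rfl fun i _ => h1 i
    _ ≤ (∑ i, (μ i)⁻¹) ^ (n - 1) * ∏ j, μ j := by
        apply mul_le_mul_of_nonneg_right
        · have := aux_esymm Finset.univ (fun i => (μ i)⁻¹) (fun i _ => inv_pos.mpr (hμ i))
          simpa using this
        · exact Finset.prod_nonneg fun i _ => (hμ i).le

open scoped ComplexOrder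
open Matrix

lemma posdef_conj_unit {n : ℕ} {B C : Matrix (Fin n) (Fin n) ℂ} (hB : B.PosDef)
    (hC : IsUnit C) : (Cᴴ * B * C).PosDef := by
  exact hB.conjTranspose_mul_mul_same (Matrix.mulVec_injective_iff_isUnit.mpr hC)

/-- **Inequality (2.6).** Let `A` and `B` be `n×n` positive definite Hermitian matrices.
Then `trace(A⁻¹B) ≤ (trace(B⁻¹A))^{n−1} · (det B / det A)`.  (Applied with `A = g`,
`B = g̃` this gives `(n + Δφ) ≤ (n − Δ̃φ)^{n−1} e^F` for solutions of the complex
Monge–Ampère equation.) -/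
theorem trace_inv_mul_le_pow_mul_det {n : ℕ} (A B : Matrix (Fin n) (Fin n) ℂ)
    (hA : A.PosDef) (hB : B.PosDef) :
    (A⁻¹ * B).trace ≤ ((B⁻¹ * A).trace) ^ (n - 1) * (B.det / A.det) := by
  classical
  obtain ⟨C, hCsd, hCC⟩ : ∃ C : Matrix (Fin n) (Fin n) ℂ, C.PosSemidef ∧ C * C = A := by
    open scoped MatrixOrder in
    exact ⟨CFC.sqrt A, (CFC.sqrt_nonneg A).posSemidef, CFC.sqrt_mul_sqrt_self A hA.posSemidef.nonneg⟩
  have hdetC : C.det * C.det = A.det := by rw [← Matrix.det_mul, hCC]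
  have hdetCne : C.det ≠ 0 := fun h => by simp [h] at hdetC; exact hA.det_pos.ne' hdetC.symm
  have hCunit : IsUnit C := (Matrix.isUnit_iff_isUnit_det C).2 hdetCne.isUnit
  have hCinvunit : IsUnit C⁻¹ := (Matrix.isUnit_nonsing_inv_iff).2 hCunit
  set M := C⁻¹ * B * C⁻¹ with hMdef
  have hCinvH : (C⁻¹)ᴴ = C⁻¹ := (hCsd.isHermitian.inv).eq
  have hM : M.PosDef := by
    have := posdef_conj_unit hB hCinvunit
    rwa [hCinvH] at this
  -- trace (A⁻¹ * B) = trace M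
  have t1 : (A⁻¹ * B).trace = M.trace := by
    rw [hMdef, ← hCC, Matrix.mul_inv_rev, Matrix.trace_mul_cycle, Matrix.trace_mul_cycle]
  -- M⁻¹ = C * B⁻¹ * C
  have hMinv : M⁻¹ = C * B⁻¹ * C := by
    rw [hMdef, Matrix.mul_inv_rev, Matrix.mul_inv_rev,
      Matrix.nonsing_inv_nonsing_inv C hdetCne.isUnit, mul_assoc]
  have t2 : (B⁻¹ * A).trace = M⁻¹.trace := by
    rw [hMinv, ← hCC]
    simp only [← mul_assoc]
    rw [Matrix.trace_mul_cycle]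
  have t3 : B.det / A.det = M.det := by
    have : M.det = C.det⁻¹ * B.det * C.det⁻¹ := by
      rw [hMdef, Matrix.det_mul, Matrix.det_mul, Matrix.det_nonsing_inv,
        Ring.inverse_eq_inv']
    rw [this, ← hdetC]
    field_simp
  rw [t1, t2, t3]
  -- now everything in terms of M
  have hH : M.IsHermitian := hM.isHermitian
  set μ := hH.eigenvalues with hμdef
  have hμpos : ∀ i, 0 < μ i := fun i => hM.eigenvalues_pos i
  set U : Matrix (Fin n) (Fin n) ℂ := (hH.eigenvectorUnitary : Matrix (Fin n) (Fin n) ℂ) with hUdef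
  have hU1 : U * star U = 1 := (Matrix.mem_unitaryGroup_iff).mp hH.eigenvectorUnitary.2
  have hU2 : star U * U = 1 := (Matrix.mem_unitaryGroup_iff').mp hH.eigenvectorUnitary.2
  have hspec : M = U * Matrix.diagonal (RCLike.ofReal ∘ μ) * star U := hH.spectral_theorem
  have trM : M.trace = ∑ i, (μ i : ℂ) := by
    rw [hspec, Matrix.trace_mul_cycle, hU2, one_mul, Matrix.trace_diagonal]
    rfl
  have hMinv2 : M⁻¹ = U * Matrix.diagonal (fun i => ((μ i : ℂ))⁻¹) * star U := by
    apply Matrix.inv_eq_right_inv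
    rw [hspec]
    calc U * Matrix.diagonal (RCLike.ofReal ∘ μ) * star U *
          (U * Matrix.diagonal (fun i => ((μ i : ℂ))⁻¹) * star U)
        = U * (Matrix.diagonal (RCLike.ofReal ∘ μ) * ((star U * U) *
            Matrix.diagonal (fun i => ((μ i : ℂ))⁻¹))) * star U := by
          simp only [mul_assoc]
      _ = 1 := by
          rw [hU2, one_mul, Matrix.diagonal_mul_diagonal]
          have hone : (fun i => (RCLike.ofReal ∘ μ) i * ((μ i : ℂ))⁻¹) = fun _ => (1 : ℂ) := by
            funext i
            simp only [Function.comp_apply]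
            exact mul_inv_cancel₀ (RCLike.ofReal_ne_zero.mpr (hμpos i).ne')
          rw [hone, Matrix.diagonal_one, mul_one, hU1]
  have trMinv : M⁻¹.trace = ∑ i, ((μ i : ℂ))⁻¹ := by
    rw [hMinv2, Matrix.trace_mul_cycle, hU2, one_mul, Matrix.trace_diagonal]
  have detM : M.det = ∏ i, (μ i : ℂ) := hH.det_eq_prod_eigenvalues
  rw [trM, trMinv, detM]
  have hr := aux_key μ hμpos
  calc (∑ i, (μ i : ℂ)) = ((∑ i, μ i : ℝ) : ℂ) := by push_cast; rfl
    _ ≤ (((∑ i, (μ i)⁻¹) ^ (n - 1) * ∏ i, μ i : ℝ) : ℂ) := by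
        exact_mod_cast hr
    _ = (∑ i, ((μ i : ℂ))⁻¹) ^ (n - 1) * ∏ i, (μ i : ℂ) := by push_cast; rfl
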